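/- For real numbers l, σ, a, b with 0 < σ < b ≤ a and b − σ < l ≤ a − σ, the spherocylinder intersection probability P(l,σ,a,b) equals (1/π)·(b−σ)²/(ab) + (2/π)·((a−σ)/a)·(l/b)·(1 − √(1 − (b−σ)²/l²)) + (2/π)·((a−σ)/a)·((b−σ)/b)·(π/2 − arcsin((b−σ)/l)) + (σ/a + σ/b − σ²/(ab)). -/
import Mathlib


open Real MeasureTheory Filter

/-- `A(l,a) = ∫_0^π min(a, l·|cos φ|) dφ` -/
noncomputable def A2 (l a : ℝ) : ℝ := ∫ φ in (0:ℝ)..π, min a (l * |Real.cos φ|)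

/-- `B(l,b) = ∫_0^π min(b, l·sin φ) dφ` -/
noncomputable def B2 (l b : ℝ) : ℝ := ∫ φ in (0:ℝ)..π, min b (l * Real.sin φ)

/-- `AB(l,a,b) = ∫_0^π min(a, l·|cos φ|)·min(b, l·sin φ) dφ` -/
noncomputable def AB2 (l a b : ℝ) : ℝ :=
  ∫ φ in (0:ℝ)..π, min a (l * |Real.cos φ|) * min b (l * Real.sin φ)

/-- Intersection probability for the 2D Buffon–Laplace needle problem. -/
noncomputable def P2 (l a b : ℝ) : ℝ :=
  (b * A2 l a + a * B2 l b - AB2 l a b) / (π * a * b)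

/-- Intersection probability for the 2D spherocylinder Buffon–Laplace problem. -/
noncomputable def P2sc (l σ a b : ℝ) : ℝ :=
  ((b - σ) * A2 l (a - σ) + (a - σ) * B2 l (b - σ) - AB2 l (a - σ) (b - σ)
    + (σ * a + σ * b - σ ^ 2) * π) / (π * a * b)

/-- `A³ᴰ(l,a) = ∫_0^{π/2} ∫_0^π min(a, l·sin ψ·|cos φ|) dφ dψ` -/
noncomputable def A3 (l a : ℝ) : ℝ :=
  ∫ ψ in (0:ℝ)..(π/2), ∫ φ in (0:ℝ)..π, min a (l * Real.sin ψ * |Real.cos φ|)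

/-- `B³ᴰ(l,b) = ∫_0^{π/2} ∫_0^π min(b, l·sin ψ·sin φ) dφ dψ` -/
noncomputable def B3 (l b : ℝ) : ℝ :=
  ∫ ψ in (0:ℝ)..(π/2), ∫ φ in (0:ℝ)..π, min b (l * Real.sin ψ * Real.sin φ)

/-- `AB³ᴰ(l,a,b) = ∫_0^{π/2} ∫_0^π min(a, l·sin ψ·|cos φ|)·min(b, l·sin ψ·sin φ) dφ dψ` -/
noncomputable def AB3 (l a b : ℝ) : ℝ :=
  ∫ ψ in (0:ℝ)..(π/2), ∫ φ in (0:ℝ)..π,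
    min a (l * Real.sin ψ * |Real.cos φ|) * min b (l * Real.sin ψ * Real.sin φ)

/-- `S³ᴰ(l,a,b) = b·A³ᴰ(l,a) + a·B³ᴰ(l,b) − AB³ᴰ(l,a,b)` -/
noncomputable def S3 (l a b : ℝ) : ℝ := b * A3 l a + a * B3 l b - AB3 l a b

/-- `F(α,β,t) = ∫_α^β √(sin²ψ − t²) dψ` -/
noncomputable def Faux (α β t : ℝ) : ℝ :=
  ∫ ψ in α..β, Real.sqrt (Real.sin ψ ^ 2 - t ^ 2)

/-- `G(α,β,t) = ∫_α^β (π/2 − arcsin(t / sin ψ)) dψ` -/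
noncomputable def Gaux (α β t : ℝ) : ℝ :=
  ∫ ψ in α..β, (π / 2 - Real.arcsin (t / Real.sin ψ))



lemma abs_cos_int : ∫ φ in (0:ℝ)..π, |Real.cos φ| = 2 := by
  have hi : ∀ u v : ℝ, IntervalIntegrable (fun φ => |Real.cos φ|) volume u v :=
    fun u v => (Real.continuous_cos.abs).intervalIntegrable u v
  have hsplit := intervalIntegral.integral_add_adjacent_intervals
    (a := (0:ℝ)) (b := π/2) (c := π) (hi 0 (π/2)) (hi (π/2) π)
  have h1 : ∫ φ in (0:ℝ)..(π/2), |Real.cos φ| = 1 := by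
    rw [intervalIntegral.integral_congr (g := Real.cos) ?_]
    · simp [integral_cos]
    · intro φ hφ
      rw [Set.uIcc_of_le (by positivity)] at hφ
      exact abs_of_nonneg (Real.cos_nonneg_of_mem_Icc ⟨by linarith [hφ.1, Real.pi_pos], hφ.2⟩)
  have h2 : ∫ φ in (π/2:ℝ)..π, |Real.cos φ| = 1 := by
    rw [intervalIntegral.integral_congr (g := fun φ => -Real.cos φ) ?_]
    · simp [integral_cos]
    · intro φ hφ
      rw [Set.uIcc_of_le (by linarith [Real.pi_pos])] at hφ
      exact abs_of_nonpos (Real.cos_nonpos_of_pi_div_two_le_of_le hφ.1 (by linarith [hφ.2, Real.pi_pos]))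
  rw [h1, h2] at hsplit
  linarith [hsplit]


lemma A2_eval {l a : ℝ} (hl : 0 ≤ l) (hla : l ≤ a) : A2 l a = 2 * l := by
  unfold A2
  rw [intervalIntegral.integral_congr (g := fun φ => l * |Real.cos φ|) ?_]
  · rw [intervalIntegral.integral_const_mul, abs_cos_int]; ring
  · intro φ _
    exact min_eq_right (le_trans
      (by nlinarith [Real.abs_cos_le_one φ, abs_nonneg (Real.cos φ)]) hla)

lemma B2_eval {l b : ℝ} (hb : 0 < b) (hbl : b < l) :
    B2 l b = 2 * l * (1 - Real.sqrt (1 - b ^ 2 / l ^ 2))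
      + b * (π - 2 * Real.arcsin (b / l)) := by
  have hl : 0 < l := hb.trans hbl
  set t := b / l with ht
  have ht0 : 0 < t := by positivity
  have ht1 : t < 1 := (div_lt_one hl).2 hbl
  set φ0 := Real.arcsin t with hφ0
  have h0 : 0 < φ0 := Real.arcsin_pos.2 ht0
  have h2 : φ0 < π / 2 := Real.arcsin_lt_pi_div_two.2 ht1
  have hsin : Real.sin φ0 = t := Real.sin_arcsin (by linarith) ht1.le
  have hcos : Real.cos φ0 = Real.sqrt (1 - t ^ 2) := Real.cos_arcsin t
  have hlt : l * t = b := by rw [ht]; field_simp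
  have hi : ∀ u v : ℝ, IntervalIntegrable (fun φ => min b (l * Real.sin φ)) volume u v :=
    fun u v => (continuous_const.min (continuous_const.mul Real.continuous_sin)).intervalIntegrable u v
  have hpi := Real.pi_pos
  have hs1 := intervalIntegral.integral_add_adjacent_intervals
    (a := (0:ℝ)) (b := φ0) (c := π - φ0) (hi 0 φ0) (hi φ0 (π - φ0))
  have hs2 := intervalIntegral.integral_add_adjacent_intervals
    (a := (0:ℝ)) (b := π - φ0) (c := π) (hi 0 (π - φ0)) (hi (π - φ0) π)
  have p1 : ∫ φ in (0:ℝ)..φ0, min b (l * Real.sin φ) = l * (1 - Real.cos φ0) := by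
    rw [intervalIntegral.integral_congr (g := fun φ => l * Real.sin φ) ?_]
    · rw [intervalIntegral.integral_const_mul, integral_sin, Real.cos_zero]
    · intro φ hφ
      rw [Set.uIcc_of_le h0.le] at hφ
      refine min_eq_right ?_
      have : Real.sin φ ≤ Real.sin φ0 :=
        Real.sin_le_sin_of_le_of_le_pi_div_two (by linarith [hφ.1]) h2.le hφ.2
      rw [hsin] at this; nlinarith
  have p3 : ∫ φ in (π - φ0)..π, min b (l * Real.sin φ) = l * (1 - Real.cos φ0) := by
    rw [intervalIntegral.integral_congr (g := fun φ => l * Real.sin φ) ?_]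
    · rw [intervalIntegral.integral_const_mul, integral_sin, Real.cos_pi_sub, Real.cos_pi]
      try ring
    · intro φ hφ
      rw [Set.uIcc_of_le (by linarith)] at hφ
      refine min_eq_right ?_
      have hs : Real.sin φ = Real.sin (π - φ) := (Real.sin_pi_sub φ).symm
      have : Real.sin (π - φ) ≤ Real.sin φ0 :=
        Real.sin_le_sin_of_le_of_le_pi_div_two (by linarith [hφ.2]) h2.le (by linarith [hφ.1])
      rw [hsin] at this; rw [hs]; nlinarith
  have p2 : ∫ φ in φ0..(π - φ0), min b (l * Real.sin φ) = b * (π - 2 * φ0) := by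
    rw [intervalIntegral.integral_congr (g := fun _ => b) ?_]
    · simp [intervalIntegral.integral_const]; ring
    · intro φ hφ
      rw [Set.uIcc_of_le (by linarith)] at hφ
      refine min_eq_left ?_
      have hts : t ≤ Real.sin φ := by
        rcases le_or_gt φ (π / 2) with h | h
        · have := Real.sin_le_sin_of_le_of_le_pi_div_two (by linarith) h hφ.1
          rwa [hsin] at this
        · have := Real.sin_le_sin_of_le_of_le_pi_div_two (x := φ0) (y := π - φ)
            (by linarith) (by linarith) (by linarith [hφ.2])
          rw [hsin, Real.sin_pi_sub] at this; exact this
      nlinarith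
  unfold B2
  rw [← hs2, ← hs1, p1, p2, p3]
  have : t ^ 2 = b ^ 2 / l ^ 2 := by rw [ht, div_pow]
  rw [hcos, this]
  ring

lemma min_int {b l : ℝ} (hb : 0 ≤ b) (hbl : b ≤ l) :
    ∫ u in (0:ℝ)..l, min b u = b * l - b ^ 2 / 2 := by
  have hi : ∀ u v : ℝ, IntervalIntegrable (fun u => min b u) volume u v :=
    fun u v => (continuous_const.min continuous_id).intervalIntegrable u v
  have hs := intervalIntegral.integral_add_adjacent_intervals
    (a := (0:ℝ)) (b := b) (c := l) (hi 0 b) (hi b l)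
  have p1 : ∫ u in (0:ℝ)..b, min b u = b ^ 2 / 2 := by
    rw [intervalIntegral.integral_congr (g := fun u => u) ?_]
    · rw [integral_id]; ring
    · intro u hu
      rw [Set.uIcc_of_le hb] at hu
      exact min_eq_right hu.2
  have p2 : ∫ u in b..l, min b u = b * (l - b) := by
    rw [intervalIntegral.integral_congr (g := fun _ => b) ?_]
    · simp [intervalIntegral.integral_const]; ring
    · intro u hu
      rw [Set.uIcc_of_le hbl] at hu
      exact min_eq_left hu.1
  rw [p1, p2] at hs
  rw [← hs]; ring

lemma AB2_eval {l a b : ℝ} (hb : 0 < b) (hbl : b < l) (hla : l ≤ a) :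
    AB2 l a b = 2 * b * l - b ^ 2 := by
  have hl : 0 < l := hb.trans hbl
  have hpi := Real.pi_pos
  unfold AB2
  rw [intervalIntegral.integral_congr
    (g := fun φ => (l * |Real.cos φ|) * min b (l * Real.sin φ)) ?_]
  swap
  · intro φ _
    have h : min a (l * |Real.cos φ|) = l * |Real.cos φ| :=
      min_eq_right (le_trans
        (by nlinarith [Real.abs_cos_le_one φ, abs_nonneg (Real.cos φ)]) hla)
    simp only [h]
  have hi : ∀ u v : ℝ, IntervalIntegrable
      (fun φ => (l * |Real.cos φ|) * min b (l * Real.sin φ)) volume u v :=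
    fun u v => (((continuous_const.mul Real.continuous_cos.abs)).mul
      (continuous_const.min (continuous_const.mul Real.continuous_sin))).intervalIntegrable u v
  have hs := intervalIntegral.integral_add_adjacent_intervals
    (a := (0:ℝ)) (b := π/2) (c := π) (hi 0 (π/2)) (hi (π/2) π)
  have hderiv : ∀ x : ℝ, HasDerivAt (fun φ => l * Real.sin φ) (l * Real.cos x) x :=
    fun x => (Real.hasDerivAt_sin x).const_mul l
  have key : ∀ u v : ℝ, ∫ x in u..v, (l * Real.cos x) • min b (l * Real.sin x)
      = ∫ y in (l * Real.sin u)..(l * Real.sin v), min b y := by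
    intro u v
    exact intervalIntegral.integral_comp_smul_deriv (fun x _ => hderiv x)
      (continuous_const.mul Real.continuous_cos).continuousOn
      (continuous_const.min continuous_id)
  have p1 : ∫ φ in (0:ℝ)..(π/2), (l * |Real.cos φ|) * min b (l * Real.sin φ)
      = ∫ u in (0:ℝ)..l, min b u := by
    rw [intervalIntegral.integral_congr
      (g := fun φ => (l * Real.cos φ) • min b (l * Real.sin φ)) ?_]
    · rw [key]; norm_num
    · intro φ hφ
      rw [Set.uIcc_of_le (by positivity)] at hφ
      have hc := abs_of_nonneg (Real.cos_nonneg_of_mem_Icc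
        (Set.mem_Icc.2 ⟨by linarith [hφ.1, Real.pi_pos], hφ.2⟩))
      simp only [hc, smul_eq_mul]
  have p2 : ∫ φ in (π/2:ℝ)..π, (l * |Real.cos φ|) * min b (l * Real.sin φ)
      = ∫ u in (0:ℝ)..l, min b u := by
    rw [intervalIntegral.integral_congr
      (g := fun φ => -((l * Real.cos φ) • min b (l * Real.sin φ))) ?_]
    · rw [intervalIntegral.integral_neg, key,
        show l * Real.sin π = 0 by simp, show l * Real.sin (π/2) = l by simp,
        intervalIntegral.integral_symm, neg_neg]
    · intro φ hφ
      rw [Set.uIcc_of_le (by linarith)] at hφ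
      have hc := abs_of_nonpos (Real.cos_nonpos_of_pi_div_two_le_of_le hφ.1
        (by linarith [hφ.2, Real.pi_pos]))
      simp only [hc, smul_eq_mul]; ring
  rw [← hs, p1, p2, min_int hb.le hbl.le]
  ring

theorem stmt10 (l σ a b : ℝ) (hσ : 0 < σ) (hσb : σ < b) (hba : b ≤ a)
    (hbl : b - σ < l) (hla : l ≤ a - σ) :
    P2sc l σ a b = 1 / π * ((b - σ) ^ 2 / (a * b))
      + 2 / π * ((a - σ) / a) * (l / b) * (1 - Real.sqrt (1 - (b - σ) ^ 2 / l ^ 2))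
      + 2 / π * ((a - σ) / a) * ((b - σ) / b) * (π / 2 - Real.arcsin ((b - σ) / l))
      + (σ / a + σ / b - σ ^ 2 / (a * b)) := by
  have hb0 : 0 < b - σ := by linarith
  have hl0 : 0 < l := hb0.trans hbl
  have ha0 : 0 < a := by linarith
  have hbpos : 0 < b := by linarith
  have hπ := Real.pi_pos
  rw [P2sc, A2_eval hl0.le hla, B2_eval hb0 hbl, AB2_eval hb0 hbl hla]
  field_simp
  ring
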